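/- Let $m \le n$ and $\gamma \in \Pi_{m,n}$. The elements of $\Pi_{m,n}$ that are strictly greater than $\gamma$ in $\le_{st}$ and differ from $\gamma$ in exactly one element (i.e., $|\alpha \setminus \gamma| = 1$) are precisely the sets $(\gamma \setminus \{\gamma_{m+1-i}\}) \cup \{j\}$ with $(i,j) \in \mathcal{L}_\gamma$; moreover, the map $(i,j) \mapsto (\gamma \setminus \{\gamma_{m+1-i}\}) \cup \{j\}$ from $\mathcal{L}_\gamma$ to this set of elements is a bijection. -/

import Mathlib

/-- The order `≤_st`: compare increasing enumerations componentwise. -/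
def leSt (I J : Finset ℕ) : Prop :=
  List.Forall₂ (· ≤ ·) (I.sort (· ≤ ·)) (J.sort (· ≤ ·))

/-- The ladder `𝓛_γ`. -/
def ladder (m n : ℕ) (γ : Finset ℕ) : Finset (ℕ × ℕ) :=
  (Finset.Icc 1 m ×ˢ Finset.Icc 1 n).filter
    (fun p => (γ.sort (· ≤ ·)).getD (m - p.1) 0 < p.2 ∧ p.2 ∉ γ)

-- bridge: finset filter card = sorted list filter length
lemma card_filter_eq_len (S : Finset ℕ) (p : ℕ → Prop) [DecidablePred p] :
    (S.filter p).card = ((S.sort (· ≤ ·)).filter p).length := by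
  rw [Finset.card, Finset.filter_val, ← Finset.sort_eq S (· ≤ ·), Multiset.filter_coe,
    Multiset.coe_card]

lemma filterLen_mono {l l' : List ℕ} (h : List.Forall₂ (· ≤ ·) l l') (c : ℕ) :
    (l'.filter (· ≤ c)).length ≤ (l.filter (· ≤ c)).length := by
  induction h with
  | nil => simp
  | @cons a b l1 l2 hab _ ih =>
    simp only [List.filter_cons]
    by_cases hb : b ≤ c
    · have ha : a ≤ c := le_trans hab hb
      simp [ha, hb]; omega
    · by_cases ha : a ≤ c <;> simp [ha, hb] <;> omega

lemma get_le_of_mem_drop {L : List ℕ} (hL : L.Pairwise (· < ·)) {t : ℕ} (ht : t < L.length)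
    {x : ℕ} (hx : x ∈ L.drop t) : L[t] ≤ x := by
  obtain ⟨i, hi, rfl⟩ := List.getElem_of_mem hx
  rw [List.getElem_drop]
  rcases Nat.eq_zero_or_pos i with h0 | h0
  · subst h0; simp
  · have := List.Pairwise.rel_get_of_lt hL (a := ⟨t, ht⟩)
      (b := ⟨t + i, by have := hi; rw [List.length_drop] at this; omega⟩) (by simp; omega)
    simpa using this.le

lemma sorted_countB {L : List ℕ} (hL : L.Pairwise (· < ·)) {t : ℕ} (ht : t < L.length) {c : ℕ}
    (h : t + 1 ≤ (L.filter (· ≤ c)).length) : L[t] ≤ c := by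
  by_contra hc
  push_neg at hc
  have hsplit : L.filter (· ≤ c) = (L.take t).filter (· ≤ c) ++ (L.drop t).filter (· ≤ c) := by
    rw [← List.filter_append, List.take_append_drop]
  have hnil : (L.drop t).filter (· ≤ c) = [] := by
    rw [List.filter_eq_nil_iff]
    intro x hx
    have := get_le_of_mem_drop hL ht hx
    simp only [decide_eq_true_eq]
    omega
  have : (L.filter (· ≤ c)).length ≤ t := by
    rw [hsplit, hnil]
    simp only [List.length_append, List.length_nil, Nat.add_zero]
    calc ((L.take t).filter (· ≤ c)).length ≤ (L.take t).length := List.length_filter_le _ _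
      _ ≤ t := by simp
  omega

lemma sorted_countA {L : List ℕ} (hL : L.Pairwise (· < ·)) {t : ℕ} (ht : t < L.length) :
    (L.filter (· ≤ L[t])).length = t + 1 := by
  have hsplit : L.filter (· ≤ L[t]) =
      (L.take (t+1)).filter (· ≤ L[t]) ++ (L.drop (t+1)).filter (· ≤ L[t]) := by
    rw [← List.filter_append, List.take_append_drop]
  have htake : (L.take (t+1)).filter (· ≤ L[t]) = L.take (t+1) := by
    rw [List.filter_eq_self]
    intro x hx
    obtain ⟨i, hi, rfl⟩ := List.getElem_of_mem hx
    rw [List.getElem_take]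
    have hi' : i < L.length := lt_of_lt_of_le hi (by simp)
    simp only [decide_eq_true_eq]
    rcases Nat.lt_or_ge i t with h' | h'
    · exact (List.Pairwise.rel_get_of_lt hL (a := ⟨i, hi'⟩) (b := ⟨t, ht⟩) (by simpa)).le
    · have : i = t := by rw [List.length_take] at hi; omega
      subst this; exact le_refl _
  have hdrop : (L.drop (t+1)).filter (· ≤ L[t]) = [] := by
    rw [List.filter_eq_nil_iff]
    intro x hx
    rcases Nat.lt_or_ge (t+1) L.length with hlt | hge
    · have h1 : L[t+1] ≤ x := get_le_of_mem_drop hL hlt hx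
      have h2 : L[t] < L[t+1] :=
        List.Pairwise.rel_get_of_lt hL (a := ⟨t, ht⟩) (b := ⟨t+1, hlt⟩) (by simp)
      simp only [decide_eq_true_eq]; omega
    · rw [List.drop_eq_nil_of_le hge] at hx; simp at hx
  rw [hsplit, htake, hdrop]
  simp only [List.length_append, List.length_nil, Nat.add_zero, List.length_take]
  omega

lemma count_of_leSt {γ α : Finset ℕ} (h : leSt γ α) (c : ℕ) :
    (α.filter (· ≤ c)).card ≤ (γ.filter (· ≤ c)).card := by
  rw [card_filter_eq_len, card_filter_eq_len]
  exact filterLen_mono h c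

lemma leSt_of_count {γ α : Finset ℕ} (hc : γ.card = α.card)
    (h : ∀ c, (α.filter (· ≤ c)).card ≤ (γ.filter (· ≤ c)).card) : leSt γ α := by
  rw [leSt, List.forall₂_iff_get]
  have hlen : (γ.sort (· ≤ ·)).length = (α.sort (· ≤ ·)).length := by
    simp [Finset.length_sort, hc]
  refine ⟨hlen, fun i h1 h2 => ?_⟩
  simp only [List.get_eq_getElem]
  set c := (α.sort (· ≤ ·))[i] with hcdef
  have hA : ((α.sort (· ≤ ·)).filter (· ≤ c)).length = i + 1 :=
    sorted_countA ((Finset.sortedLT_sort α).pairwise) h2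
  have := h c
  rw [card_filter_eq_len, card_filter_eq_len, hA] at this
  exact sorted_countB ((Finset.sortedLT_sort γ).pairwise) h1 this

lemma swap_count {γ : Finset ℕ} {a j : ℕ} (ha : a ∈ γ) (hj : j ∉ γ) (haj : a < j) (c : ℕ) :
    ((insert j (γ.erase a)).filter (· ≤ c)).card ≤ (γ.filter (· ≤ c)).card := by
  rw [Finset.filter_insert, Finset.filter_erase]
  by_cases hjc : j ≤ c
  · have hac : a ≤ c := le_of_lt (lt_of_lt_of_le haj hjc)
    have hamem : a ∈ γ.filter (· ≤ c) := Finset.mem_filter.2 ⟨ha, hac⟩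
    simp only [hjc, if_pos]
    calc ((insert j ((γ.filter (· ≤ c)).erase a))).card
        ≤ ((γ.filter (· ≤ c)).erase a).card + 1 := Finset.card_insert_le _ _
      _ = (γ.filter (· ≤ c)).card := by
          rw [Finset.card_erase_of_mem hamem]
          have : 1 ≤ (γ.filter (· ≤ c)).card := Finset.card_pos.2 ⟨a, hamem⟩
          omega
  · simp only [hjc, if_neg, not_false_iff]
    exact le_trans (Finset.card_erase_le) (le_refl _)

lemma not_leSt_swap {γ : Finset ℕ} {a j : ℕ} (ha : a ∈ γ) (hj : j ∉ γ) (hja : j < a) :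
    ¬ leSt γ (insert j (γ.erase a)) := by
  intro h
  have hcount := count_of_leSt h j
  have h1 : ((insert j (γ.erase a)).filter (· ≤ j)).card = ((γ.erase a).filter (· ≤ j)).card + 1 := by
    rw [Finset.filter_insert, if_pos (le_refl j)]
    refine Finset.card_insert_of_notMem ?_
    intro hmem
    exact hj (Finset.mem_of_mem_erase (Finset.mem_filter.1 hmem).1)
  have h2 : (γ.filter (· ≤ j)).card = ((γ.erase a).filter (· ≤ j)).card := by
    rw [Finset.filter_erase, Finset.erase_eq_of_notMem]
    intro hmem
    have := (Finset.mem_filter.1 hmem).2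
    omega
  omega

/-- The elements of `Π_{m,n}` strictly greater than `γ` that differ from `γ` by exactly
one element are precisely the `(γ \ {γ_{m+1-i}}) ∪ {j}` with `(i,j) ∈ 𝓛_γ`, and the map
`(i,j) ↦ (γ \ {γ_{m+1-i}}) ∪ {j}` is a bijection of `𝓛_γ` onto this set. -/
theorem stmt5 (m n : ℕ) (hm : 1 ≤ m) (hmn : m ≤ n) (γ : Finset ℕ)
    (hγs : γ ⊆ Finset.Icc 1 n) (hγc : γ.card = m) :
    (∀ α : Finset ℕ, α ⊆ Finset.Icc 1 n → α.card = m →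
      ((leSt γ α ∧ γ ≠ α ∧ (α \ γ).card = 1) ↔
        ∃ p ∈ ladder m n γ,
          α = insert p.2 (γ.erase ((γ.sort (· ≤ ·)).getD (m - p.1) 0)))) ∧
    (∀ p ∈ ladder m n γ, ∀ q ∈ ladder m n γ,
      insert p.2 (γ.erase ((γ.sort (· ≤ ·)).getD (m - p.1) 0)) =
        insert q.2 (γ.erase ((γ.sort (· ≤ ·)).getD (m - q.1) 0)) → p = q) := by
  set L := γ.sort (· ≤ ·) with hL
  have hLlen : L.length = m := by rw [hL, Finset.length_sort, hγc]
  have hLsorted : L.Pairwise (· < ·) := (Finset.sortedLT_sort γ).pairwise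
  have hLnodup : L.Nodup := Finset.sort_nodup γ (· ≤ ·)
  -- key: for p in ladder, the erased element
  have ladder_elt : ∀ p ∈ ladder m n γ,
      1 ≤ p.1 ∧ p.1 ≤ m ∧ 1 ≤ p.2 ∧ p.2 ≤ n ∧
      (∃ h : m - p.1 < L.length, L.getD (m - p.1) 0 = L[m - p.1]) ∧
      L.getD (m - p.1) 0 ∈ γ ∧ L.getD (m - p.1) 0 < p.2 ∧ p.2 ∉ γ := by
    intro p hp
    rw [ladder, Finset.mem_filter, Finset.mem_product, Finset.mem_Icc, Finset.mem_Icc] at hp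
    obtain ⟨⟨⟨h1, h2⟩, h3, h4⟩, h5, h6⟩ := hp
    have hlt : m - p.1 < L.length := by omega
    have hgd : L.getD (m - p.1) 0 = L[m - p.1] := List.getD_eq_getElem L 0 hlt
    refine ⟨h1, h2, h3, h4, ⟨hlt, hgd⟩, ?_, h5, h6⟩
    rw [hgd, ← Finset.mem_sort (· ≤ ·)]
    exact List.getElem_mem _
  -- main structural fact: for p in ladder, properties of α
  constructor
  · intro α hαs hαc
    constructor
    · rintro ⟨hle, hne, hone⟩
      -- γ \ α also has card 1
      have hinter : (α ∩ γ).card + (α \ γ).card = α.card := by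
        rw [Finset.card_inter_add_card_sdiff]
      have hinter' : (γ ∩ α).card + (γ \ α).card = γ.card := by
        rw [Finset.card_inter_add_card_sdiff]
      have hci : (α ∩ γ).card = (γ ∩ α).card := by rw [Finset.inter_comm]
      have hone' : (γ \ α).card = 1 := by omega
      obtain ⟨a, hadef⟩ := Finset.card_eq_one.1 hone'
      obtain ⟨j, hjdef⟩ := Finset.card_eq_one.1 hone
      have haγ : a ∈ γ := (Finset.mem_sdiff.1 (hadef ▸ Finset.mem_singleton_self a)).1
      have haα : a ∉ α := (Finset.mem_sdiff.1 (hadef ▸ Finset.mem_singleton_self a)).2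
      have hjα : j ∈ α := (Finset.mem_sdiff.1 (hjdef ▸ Finset.mem_singleton_self j)).1
      have hjγ : j ∉ γ := (Finset.mem_sdiff.1 (hjdef ▸ Finset.mem_singleton_self j)).2
      have hαeq : α = insert j (γ.erase a) := by
        ext x
        simp only [Finset.mem_insert, Finset.mem_erase]
        constructor
        · intro hx
          by_cases hxγ : x ∈ γ
          · right
            refine ⟨fun hxa => haα (hxa ▸ hx), hxγ⟩
          · left
            have : x ∈ α \ γ := Finset.mem_sdiff.2 ⟨hx, hxγ⟩
            rw [hjdef] at this
            exact Finset.mem_singleton.1 this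
        · rintro (rfl | ⟨hxa, hxγ⟩)
          · exact hjα
          · by_contra hxα
            have : x ∈ γ \ α := Finset.mem_sdiff.2 ⟨hxγ, hxα⟩
            rw [hadef] at this
            exact hxa (Finset.mem_singleton.1 this)
      have haj : a < j := by
        rcases lt_trichotomy a j with h' | h' | h'
        · exact h'
        · exact absurd (h' ▸ haγ) hjγ
        · exact absurd (hαeq ▸ hle) (not_leSt_swap haγ hjγ h')
      -- find index of a
      have haL : a ∈ L := (Finset.mem_sort (· ≤ ·)).2 haγ
      obtain ⟨k, hk, hak⟩ := List.getElem_of_mem haL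
      refine ⟨(m - k, j), ?_, ?_⟩
      · rw [ladder, Finset.mem_filter, Finset.mem_product, Finset.mem_Icc, Finset.mem_Icc]
        have hkm : k < m := hLlen ▸ hk
        have hmmk : m - (m - k) = k := by omega
        have hgd : L.getD (m - (m - k)) 0 = a := by
          rw [hmmk, List.getD_eq_getElem L 0 hk, hak]
        have hjn : j ∈ Finset.Icc 1 n := hαs hjα
        rw [Finset.mem_Icc] at hjn
        exact ⟨⟨⟨by omega, by omega⟩, hjn⟩, by rw [hgd]; exact haj, hjγ⟩
      · have hkm : k < m := hLlen ▸ hk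
        have hmmk : m - (m - k) = k := by omega
        have hgd : L.getD (m - (m - k)) 0 = a := by
          rw [hmmk, List.getD_eq_getElem L 0 hk, hak]
        show α = insert j (γ.erase (L.getD (m - (m - k)) 0))
        rw [hgd]; exact hαeq
    · rintro ⟨p, hp, hαeq⟩
      obtain ⟨h1, h2, h3, h4, ⟨hlt, hgd⟩, haγ, haj, hjγ⟩ := ladder_elt p hp
      set a := L.getD (m - p.1) 0 with hadef
      have hαeq' : α = insert p.2 (γ.erase a) := hαeq
      have haj' : a ≠ p.2 := ne_of_lt haj
      have haα : a ∉ α := by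
        rw [hαeq']
        simp only [Finset.mem_insert, Finset.mem_erase]
        rintro (h' | ⟨h', _⟩)
        · exact haj' h'
        · exact h' rfl
      refine ⟨?_, ?_, ?_⟩
      · rw [hαeq']
        refine leSt_of_count ?_ (swap_count haγ hjγ haj)
        rw [hγc, ← hαeq', hαc]
      · intro h'
        exact haα (h' ▸ haγ)
      · have : α \ γ = {p.2} := by
          ext x
          rw [Finset.mem_sdiff, Finset.mem_singleton, hαeq']
          simp only [Finset.mem_insert, Finset.mem_erase]
          constructor
          · rintro ⟨(rfl | ⟨_, hxγ⟩), hxγ'⟩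
            · rfl
            · exact absurd hxγ hxγ'
          · rintro rfl
            exact ⟨Or.inl rfl, hjγ⟩
        rw [this, Finset.card_singleton]
  · intro p hp q hq heq
    obtain ⟨hp1, hp2, hp3, hp4, ⟨hplt, hpgd⟩, hpaγ, hpaj, hpjγ⟩ := ladder_elt p hp
    obtain ⟨hq1, hq2, hq3, hq4, ⟨hqlt, hqgd⟩, hqaγ, hqaj, hqjγ⟩ := ladder_elt q hq
    set ap := L.getD (m - p.1) 0 with hapdef
    set aq := L.getD (m - q.1) 0 with haqdef
    -- the inserted element is the unique element not in γ
    have hj : p.2 = q.2 := by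
      have hp2mem : p.2 ∈ insert q.2 (γ.erase aq) := by
        rw [← heq]; exact Finset.mem_insert_self _ _
      rw [Finset.mem_insert] at hp2mem
      rcases hp2mem with h' | h'
      · exact h'
      · exact absurd (Finset.mem_of_mem_erase h') hpjγ
    -- the erased element is the unique element of γ not in α
    have ha : ap = aq := by
      have hapα : ap ∉ insert p.2 (γ.erase ap) := by
        simp only [Finset.mem_insert, Finset.mem_erase]
        rintro (h' | ⟨h', _⟩)
        · exact absurd h' (ne_of_lt hpaj)
        · exact h' rfl
      have haqα : aq ∉ insert p.2 (γ.erase ap) := by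
        rw [heq]
        simp only [Finset.mem_insert, Finset.mem_erase]
        rintro (h' | ⟨h', _⟩)
        · exact absurd h' (ne_of_lt hqaj)
        · exact h' rfl
      by_contra hne
      -- aq ∈ γ, aq ≠ ap, so aq ∈ erase, so aq ∈ α, contradiction
      exact haqα (Finset.mem_insert_of_mem (Finset.mem_erase.2 ⟨fun h => hne h.symm, hqaγ⟩))
    have hi : p.1 = q.1 := by
      rw [hpgd, hqgd] at ha
      have := List.nodup_iff_injective_getElem.1 hLnodup
      have h' := @this ⟨m - p.1, hplt⟩ ⟨m - q.1, hqlt⟩ ha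
      simp only [Fin.mk.injEq] at h'
      omega
    exact Prod.ext hi hj
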